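/- Let Σ ∈ ℝ^{p×p} be positive definite, θ0 ∈ ℝ^p with support S, and ξ > 0; let θ̂∞(ξ) be the unique population-level estimator. Let T ⊇ S and v ∈ {+1,0,−1}^p with supp(v) = T. Then sign(θ̂∞(ξ)) = v if and only if both (i) ‖Σ_{T^c,T} Σ_{T,T}^{-1} v_T‖_∞ ≤ 1 and (ii) v_T = sign(θ0_T − ξ Σ_{T,T}^{-1} v_T). Furthermore, in that case θ̂∞(ξ) is given by θ̂∞_{T^c} = 0 and θ̂∞_T = θ0_T − ξ Σ_{T,T}^{-1} v_T. -/

import Mathlib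

open Matrix Finset MeasureTheory ProbabilityTheory
noncomputable section

/-- The ℓ¹ norm of a vector. -/
def l1n {p : ℕ} (v : Fin p → ℝ) : ℝ := ∑ i, |v i|

/-- The number of nonzero entries of a vector (its "ℓ⁰ norm"). -/
def l0n {p : ℕ} (v : Fin p → ℝ) : ℕ := (Finset.univ.filter fun i => v i ≠ 0).card

/-- The support of a vector, as a `Finset`. -/
def suppv {p : ℕ} (v : Fin p → ℝ) : Finset (Fin p) := Finset.univ.filter fun i => v i ≠ 0

/-- The entrywise sign vector. -/
def sgnv {p : ℕ} (v : Fin p → ℝ) : Fin p → ℝ := fun i => Real.sign (v i)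

/-- The zero-noise Lasso objective
`θ ↦ (1/2)⟨θ−θ0, Σ(θ−θ0)⟩ + ξ‖θ‖₁`. -/
def znObj {p : ℕ} (S : Matrix (Fin p) (Fin p) ℝ) (th0 : Fin p → ℝ) (xi : ℝ)
    (th : Fin p → ℝ) : ℝ :=
  (1/2) * ((th - th0) ⬝ᵥ (S *ᵥ (th - th0))) + xi * l1n th

/-- The Lasso objective `θ ↦ (1/(2n))‖Y − Xθ‖₂² + λ‖θ‖₁`. -/
def lassoObj {n p : ℕ} (X : Matrix (Fin n) (Fin p) ℝ) (Y : Fin n → ℝ) (lam : ℝ)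
    (th : Fin p → ℝ) : ℝ :=
  (1/(2*(n:ℝ))) * (∑ i, (Y i - (X *ᵥ th) i)^2) + lam * l1n th

/-- The submatrix `A_{T,T'}` with rows in `T` and columns in `T'`. -/
def subM {p : ℕ} (A : Matrix (Fin p) (Fin p) ℝ) (T T' : Finset (Fin p)) : Matrix ↥T ↥T' ℝ :=
  A.submatrix Subtype.val Subtype.val

/-- The restriction `v_T` of a vector to coordinates in `T`. -/
def restrv {p : ℕ} (v : Fin p → ℝ) (T : Finset (Fin p)) : ↥T → ℝ := fun i => v i

/-- Extension of a vector indexed by `T` to a vector indexed by `Fin p`, by zero. -/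
def extendT {p : ℕ} (T : Finset (Fin p)) (g : ↥T → ℝ) : Fin p → ℝ :=
  fun i => if h : i ∈ T then g ⟨i, h⟩ else 0

-- symmetric dot product swap
lemma dot_symm {p : ℕ} {Sig : Matrix (Fin p) (Fin p) ℝ} (hs : ∀ a b, Sig a b = Sig b a)
    (x y : Fin p → ℝ) : x ⬝ᵥ (Sig *ᵥ y) = y ⬝ᵥ (Sig *ᵥ x) := by
  simp only [dotProduct, mulVec, Finset.mul_sum]
  rw [Finset.sum_comm]
  exact Finset.sum_congr rfl fun j _ => Finset.sum_congr rfl fun k _ => by rw [hs j k]; ring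

lemma l1n_update {p : ℕ} (th : Fin p → ℝ) (i : Fin p) (t : ℝ) :
    l1n (Function.update th i t) = l1n th - |th i| + |t| := by
  unfold l1n
  have h : ∀ j, |Function.update th i t j| = Function.update (fun k => |th k|) i |t| j := by
    intro j; by_cases hj : j = i
    · subst hj; simp
    · simp [Function.update_of_ne hj]
  rw [Finset.sum_congr rfl (fun j _ => h j), Finset.sum_update_of_mem (Finset.mem_univ i)]
  rw [show (∑ j ∈ Finset.univ \ {i}, |th j|) = (∑ j, |th j|) - |th i| by
    rw [Finset.sum_sdiff_eq_sub (by simp), Finset.sum_singleton]]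
  ring

lemma znObj_update {p : ℕ} {Sig : Matrix (Fin p) (Fin p) ℝ} (hs : ∀ a b, Sig a b = Sig b a)
    (th0 : Fin p → ℝ) (xi : ℝ) (th : Fin p → ℝ) (i : Fin p) (t : ℝ) :
    znObj Sig th0 xi (Function.update th i (th i + t)) =
      znObj Sig th0 xi th + t * ((Sig *ᵥ (th - th0)) i) + t^2 * Sig i i / 2
        + xi * (|th i + t| - |th i|) := by
  have hupd : Function.update th i (th i + t) - th0 = (th - th0) + Pi.single i t := by
    funext j
    by_cases hj : j = i
    · subst hj; simp [Function.update_self]; ring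
    · simp [Function.update_of_ne hj, Pi.single_eq_of_ne hj]
  unfold znObj
  rw [hupd, l1n_update]
  rw [mulVec_add, dotProduct_add, add_dotProduct, add_dotProduct]
  have h1 : Pi.single i t ⬝ᵥ (Sig *ᵥ (th - th0)) = t * (Sig *ᵥ (th - th0)) i :=
    single_dotProduct _ _ _
  have h2 : (th - th0) ⬝ᵥ (Sig *ᵥ Pi.single i t) = t * (Sig *ᵥ (th - th0)) i := by
    rw [dot_symm hs, h1]
  have h3 : Pi.single i t ⬝ᵥ (Sig *ᵥ Pi.single i t) = t^2 * Sig i i := by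
    rw [single_dotProduct]
    simp [mulVec, dotProduct_single]
    ring
  rw [h1, h2, h3]
  ring

-- limit helper
lemma nonneg_of_small {c K δ : ℝ} (hδ : 0 < δ) (hK : 0 ≤ K)
    (h : ∀ t, 0 < t → t < δ → 0 ≤ c + t * K) : 0 ≤ c := by
  by_contra hc
  push_neg at hc
  set t := min (δ/2) (-c/(2*(K+1))) with ht
  have ht0 : 0 < t := lt_min (by linarith) (div_pos (by linarith) (by linarith))
  have ht1 : t < δ := lt_of_le_of_lt (min_le_left _ _) (by linarith)
  have ht2 : t ≤ -c/(2*(K+1)) := min_le_right _ _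
  have h2 : t * (2*(K+1)) ≤ -c := (le_div_iff₀ (by linarith)).mp ht2
  have := h t ht0 ht1
  nlinarith

lemma diag_pos {p : ℕ} {Sig : Matrix (Fin p) (Fin p) ℝ} (hSig : Sig.PosDef) (i : Fin p) :
    0 < Sig i i := by
  have := hSig.dotProduct_mulVec_pos (x := Pi.single i 1) (by
    intro h
    have := congrFun h i
    simp at this)
  simpa [dotProduct_single, mulVec, single_dotProduct] using this

lemma kkt_nec {p : ℕ} {Sig : Matrix (Fin p) (Fin p) ℝ} (hSig : Sig.PosDef)
    {th0 : Fin p → ℝ} {xi : ℝ} (hxi : 0 < xi) {thinf : Fin p → ℝ}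
    (hmin : ∀ th : Fin p → ℝ, znObj Sig th0 xi thinf ≤ znObj Sig th0 xi th) (i : Fin p) :
    (thinf i ≠ 0 → (Sig *ᵥ (thinf - th0)) i + xi * Real.sign (thinf i) = 0) ∧
    (thinf i = 0 → |(Sig *ᵥ (thinf - th0)) i| ≤ xi) := by
  have hs : ∀ a b, Sig a b = Sig b a := fun a b => by
    have := congrFun (congrFun hSig.1 a) b
    simpa using this.symm
  set g := (Sig *ᵥ (thinf - th0)) i with hg
  have key : ∀ t : ℝ, 0 ≤ t * g + t^2 * Sig i i / 2 + xi * (|thinf i + t| - |thinf i|) := by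
    intro t
    have := hmin (Function.update thinf i (thinf i + t))
    rw [znObj_update hs] at this
    linarith
  have hdiag := diag_pos hSig i
  constructor
  · intro hne
    set s := Real.sign (thinf i) with hsdef
    have habs : ∀ t : ℝ, |t| < |thinf i| → |thinf i + t| - |thinf i| = t * s := by
      intro t ht
      rcases lt_trichotomy (thinf i) 0 with h0 | h0 | h0
      · rw [hsdef, Real.sign_of_neg h0]
        rw [abs_of_neg h0] at ht
        rw [abs_of_neg (by cases abs_lt.mp ht; linarith), abs_of_neg h0]; ring
      · exact absurd h0 hne
      · rw [hsdef, Real.sign_of_pos h0]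
        rw [abs_of_pos h0] at ht
        rw [abs_of_pos (by cases abs_lt.mp ht; linarith), abs_of_pos h0]; ring
    have habs0 : 0 < |thinf i| := abs_pos.mpr hne
    have hpos : 0 ≤ g + xi * s := by
      apply nonneg_of_small habs0 (le_of_lt (half_pos hdiag))
      intro t ht0 ht1
      have := key t
      rw [habs t (by rw [abs_of_pos ht0]; exact ht1)] at this
      have h2 : 0 ≤ t * ((g + xi * s) + t * (Sig i i / 2)) := by nlinarith
      nlinarith [nonneg_of_mul_nonneg_right h2 ht0]
    have hneg : 0 ≤ -(g + xi * s) := by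
      apply nonneg_of_small habs0 (le_of_lt (half_pos hdiag))
      intro t ht0 ht1
      have := key (-t)
      rw [habs (-t) (by rw [abs_neg, abs_of_pos ht0]; exact ht1)] at this
      have h2 : 0 ≤ t * (-(g + xi * s) + t * (Sig i i / 2)) := by nlinarith
      nlinarith [nonneg_of_mul_nonneg_right h2 ht0]
    linarith
  · intro h0
    have habs : ∀ t : ℝ, |thinf i + t| - |thinf i| = |t| := by intro t; simp [h0]
    have hpos : 0 ≤ g + xi := by
      apply nonneg_of_small one_pos (le_of_lt (half_pos hdiag))
      intro t ht0 ht1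
      have := key t
      rw [habs t, abs_of_pos ht0] at this
      have h2 : 0 ≤ t * ((g + xi) + t * (Sig i i / 2)) := by nlinarith
      nlinarith [nonneg_of_mul_nonneg_right h2 ht0]
    have hneg : 0 ≤ -g + xi := by
      apply nonneg_of_small one_pos (le_of_lt (half_pos hdiag))
      intro t ht0 ht1
      have := key (-t)
      rw [habs (-t), abs_neg, abs_of_pos ht0] at this
      have h2 : 0 ≤ t * ((-g + xi) + t * (Sig i i / 2)) := by nlinarith
      nlinarith [nonneg_of_mul_nonneg_right h2 ht0]
    rw [abs_le]; constructor <;> linarith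

lemma star_dot {p : ℕ} (d : Fin p → ℝ) : star d = d := by
  funext i; simp

lemma kkt_suf {p : ℕ} {Sig : Matrix (Fin p) (Fin p) ℝ} (hSig : Sig.PosDef)
    {th0 : Fin p → ℝ} {xi : ℝ} (hxi : 0 < xi) {ts z : Fin p → ℝ}
    (hz1 : ∀ i, |z i| ≤ 1) (hz2 : ∀ i, ts i ≠ 0 → z i = Real.sign (ts i))
    (heq : ∀ i, (Sig *ᵥ (ts - th0)) i + xi * z i = 0) :
    ∀ th, znObj Sig th0 xi ts ≤ znObj Sig th0 xi th := by
  intro th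
  have hs : ∀ a b, Sig a b = Sig b a := fun a b => by
    have := congrFun (congrFun hSig.1 a) b
    simpa using this.symm
  set d := th - ts with hdef
  have hd : th - th0 = (ts - th0) + d := by funext j; simp [hdef]
  have hq : (th-th0) ⬝ᵥ (Sig *ᵥ (th-th0)) =
      (ts-th0) ⬝ᵥ (Sig *ᵥ (ts-th0)) + 2*(d ⬝ᵥ (Sig *ᵥ (ts - th0))) + d ⬝ᵥ (Sig *ᵥ d) := by
    rw [hd, mulVec_add, dotProduct_add, add_dotProduct, add_dotProduct,
      dot_symm hs (ts - th0) d]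
    ring
  have hdd : 0 ≤ d ⬝ᵥ (Sig *ᵥ d) := by
    have := hSig.posSemidef.dotProduct_mulVec_nonneg d
    rwa [star_dot] at this
  have hl1 : ∀ i, z i * ts i = |ts i| := by
    intro i
    by_cases h : ts i = 0
    · simp [h]
    · rw [hz2 i h]
      rcases lt_trichotomy (ts i) 0 with h0 | h0 | h0
      · rw [Real.sign_of_neg h0, abs_of_neg h0]; ring
      · exact absurd h0 h
      · rw [Real.sign_of_pos h0, abs_of_pos h0]; ring
  have hl2 : ∀ i, z i * th i ≤ |th i| := by
    intro i
    calc z i * th i ≤ |z i * th i| := le_abs_self _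
    _ = |z i| * |th i| := abs_mul _ _
    _ ≤ 1 * |th i| := by
        apply mul_le_mul_of_nonneg_right (hz1 i) (abs_nonneg _)
    _ = |th i| := one_mul _
  have hZ : (∑ i, z i * d i) ≤ l1n th - l1n ts := by
    unfold l1n
    rw [← Finset.sum_sub_distrib]
    apply Finset.sum_le_sum
    intro i _
    have h1 := hl1 i
    have h2 := hl2 i
    have : z i * d i = z i * th i - z i * ts i := by
      have hdi : d i = th i - ts i := rfl
      rw [hdi]; ring
    linarith
  have hzero : d ⬝ᵥ (Sig *ᵥ (ts - th0)) + xi * (∑ i, z i * d i) = 0 := by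
    simp only [dotProduct]
    rw [Finset.mul_sum, ← Finset.sum_add_distrib]
    apply Finset.sum_eq_zero
    intro i _
    linear_combination (d i) * (heq i)
  have hxz := mul_le_mul_of_nonneg_left hZ hxi.le
  unfold znObj
  rw [hq]
  linarith

lemma min_uniq {p : ℕ} {Sig : Matrix (Fin p) (Fin p) ℝ} (hSig : Sig.PosDef)
    {th0 : Fin p → ℝ} {xi : ℝ} (hxi : 0 < xi) {a b : Fin p → ℝ}
    (ha : ∀ th, znObj Sig th0 xi a ≤ znObj Sig th0 xi th)
    (hb : ∀ th, znObj Sig th0 xi b ≤ znObj Sig th0 xi th) : a = b := by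
  by_contra hab
  have hs : ∀ i j, Sig i j = Sig j i := fun i j => by
    have := congrFun (congrFun hSig.1 i) j
    simpa using this.symm
  set c : Fin p → ℝ := fun i => (a i + b i)/2 with hc
  have hcu : c - th0 = (1/2 : ℝ) • ((a - th0) + (b - th0)) := by
    funext j; simp [hc]; ring
  have hq : (c - th0) ⬝ᵥ (Sig *ᵥ (c - th0)) =
      (1/2)*((a - th0) ⬝ᵥ (Sig *ᵥ (a - th0))) + (1/2)*((b - th0) ⬝ᵥ (Sig *ᵥ (b - th0)))
        - (1/4)*((a-b) ⬝ᵥ (Sig *ᵥ (a-b))) := by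
    have hab2 : a - b = (a - th0) - (b - th0) := by funext j; simp
    rw [hcu, hab2, Matrix.mulVec_smul, smul_dotProduct, dotProduct_smul,
      mulVec_add, dotProduct_add, add_dotProduct, add_dotProduct,
      sub_eq_add_neg (a - th0) (b - th0), mulVec_add, dotProduct_add, add_dotProduct, add_dotProduct,
      Matrix.mulVec_neg, neg_dotProduct, dotProduct_neg, dotProduct_neg, neg_dotProduct,
      dot_symm hs (b - th0) (a - th0)]
    simp only [smul_eq_mul]
    ring
  have hdpos : 0 < (a-b) ⬝ᵥ (Sig *ᵥ (a-b)) := by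
    have hne : a - b ≠ 0 := sub_ne_zero_of_ne hab
    have := hSig.dotProduct_mulVec_pos hne
    rwa [star_dot] at this
  have hl : l1n c ≤ (1/2)*(l1n a) + (1/2)*(l1n b) := by
    unfold l1n
    calc (∑ i, |c i|) ≤ ∑ i, ((1/2)*|a i| + (1/2)*|b i|) := by
          apply Finset.sum_le_sum
          intro i _
          have hci : c i = (a i + b i)/2 := rfl
          rw [hci]
          calc |(a i + b i)/2| ≤ (|a i| + |b i|)/2 := by
                rw [abs_div, abs_two]
                apply div_le_div_of_nonneg_right ?_ (by norm_num)
                exact abs_add_le _ _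
          _ = (1/2)*|a i| + (1/2)*|b i| := by ring
    _ = (1/2)*(∑ i, |a i|) + (1/2)*(∑ i, |b i|) := by
          rw [Finset.sum_add_distrib, ← Finset.mul_sum, ← Finset.mul_sum]
  have hab' : znObj Sig th0 xi a = znObj Sig th0 xi b := le_antisymm (ha b) (hb a)
  have hcontra : znObj Sig th0 xi c < znObj Sig th0 xi a := by
    have hxl : xi * l1n c ≤ xi * ((1/2)*(l1n a) + (1/2)*(l1n b)) :=
      mul_le_mul_of_nonneg_left hl hxi.le
    have hxl2 : xi * ((1/2)*(l1n a) + (1/2)*(l1n b))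
        = (1/2)*(xi * l1n a) + (1/2)*(xi * l1n b) := by ring
    unfold znObj at hab' ⊢
    rw [hq]
    linarith
  exact absurd (ha c) (not_le.mpr hcontra)






lemma star_dot' {ι : Type*} (d : ι → ℝ) : star d = d := by funext i; simp

lemma mulVec_extendT {p : ℕ} (Sig : Matrix (Fin p) (Fin p) ℝ) (T : Finset (Fin p))
    (g : ↥T → ℝ) (i : Fin p) (hi : i ∈ T) :
    (Sig *ᵥ extendT T g) i = (subM Sig T T *ᵥ g) ⟨i, hi⟩ := by
  show (∑ k, Sig i k * extendT T g k) = _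
  have h1 : (∑ k, Sig i k * extendT T g k) = ∑ k ∈ T, Sig i k * extendT T g k :=
    (Finset.sum_subset (Finset.subset_univ T) (fun k _ hk => by
      simp [extendT, dif_neg hk])).symm
  rw [h1, ← Finset.sum_attach T (fun k => Sig i k * extendT T g k)]
  show _ = ∑ k : ↥T, Sig i k.val * g k
  rw [Finset.univ_eq_attach]
  apply Finset.sum_congr rfl
  intro k _
  simp [extendT, dif_pos k.2]

lemma dot_extendT {p : ℕ} (T : Finset (Fin p)) (x : ↥T → ℝ) (y : Fin p → ℝ) :
    extendT T x ⬝ᵥ y = ∑ i : ↥T, x i * y i.val := by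
  show (∑ k, extendT T x k * y k) = _
  have h1 : (∑ k, extendT T x k * y k) = ∑ k ∈ T, extendT T x k * y k :=
    (Finset.sum_subset (Finset.subset_univ T) (fun k _ hk => by
      simp [extendT, dif_neg hk])).symm
  rw [h1, ← Finset.sum_attach T (fun k => extendT T x k * y k), Finset.univ_eq_attach]
  apply Finset.sum_congr rfl
  intro k _
  simp [extendT, dif_pos k.2]

lemma subM_posDef {p : ℕ} {Sig : Matrix (Fin p) (Fin p) ℝ} (hSig : Sig.PosDef)
    (T : Finset (Fin p)) : (subM Sig T T).PosDef := by
  have hs : ∀ a b, Sig a b = Sig b a := fun a b => by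
    have := congrFun (congrFun hSig.1 a) b
    simpa using this.symm
  refine Matrix.PosDef.of_dotProduct_mulVec_pos ?_ ?_
  · show (subM Sig T T)ᴴ = subM Sig T T
    ext i j
    simp [subM, Matrix.conjTranspose_apply, hs]
  · intro x hx
    have hxe : extendT T x ≠ 0 := by
      intro h
      apply hx
      funext i
      have := congrFun h i.val
      simpa [extendT, dif_pos i.2] using this
    have hpos := hSig.dotProduct_mulVec_pos hxe
    rw [star_dot'] at hpos
    rw [star_dot']
    have hcalc : extendT T x ⬝ᵥ (Sig *ᵥ extendT T x) = x ⬝ᵥ (subM Sig T T *ᵥ x) := by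
      rw [dot_extendT]
      show _ = ∑ i : ↥T, x i * (subM Sig T T *ᵥ x) i
      apply Finset.sum_congr rfl
      intro i _
      rw [mulVec_extendT Sig T x i.val i.2]
    rwa [hcalc] at hpos

/-- Lemma 8 of the paper.  Characterization of the signed support of
the population-level estimator: for `Σ` positive definite, `T ⊇ S`, `v ∈ {+1,0,−1}^p`
with `supp(v) = T`, `sign(θ̂∞(ξ)) = v` iff (i) `‖Σ_{Tᶜ,T}Σ_{T,T}^{-1}v_T‖_∞ ≤ 1` and
(ii) `v_T = sign(θ0_T − ξΣ_{T,T}^{-1}v_T)`; and in that case `θ̂∞_{Tᶜ} = 0` and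
`θ̂∞_T = θ0_T − ξΣ_{T,T}^{-1}v_T`. -/
theorem stmt11
    (p : ℕ)
    (Sig : Matrix (Fin p) (Fin p) ℝ) (hSig : Sig.PosDef)
    (th0 : Fin p → ℝ)
    (xi : ℝ) (hxi : 0 < xi)
    (thinf : Fin p → ℝ)
    (hmin : ∀ th : Fin p → ℝ, znObj Sig th0 xi thinf ≤ znObj Sig th0 xi th)
    (T : Finset (Fin p)) (hST : suppv th0 ⊆ T)
    (v : Fin p → ℝ) (hv : ∀ i, v i = 1 ∨ v i = 0 ∨ v i = -1)
    (hsuppv : suppv v = T) :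
    (sgnv thinf = v ↔
      ((∀ j, j ∉ T → |(Sig *ᵥ extendT T ((subM Sig T T)⁻¹ *ᵥ restrv v T)) j| ≤ 1) ∧
       (∀ i ∈ T, v i =
          Real.sign (th0 i - xi * extendT T ((subM Sig T T)⁻¹ *ᵥ restrv v T) i)))) ∧
    (sgnv thinf = v →
      (∀ i ∈ T, thinf i = th0 i - xi * extendT T ((subM Sig T T)⁻¹ *ᵥ restrv v T) i) ∧
      (∀ j, j ∉ T → thinf j = 0)) := by
  classical
  have hs : ∀ a b, Sig a b = Sig b a := fun a b => by
    have := congrFun (congrFun hSig.1 a) b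
    simpa using this.symm
  set A := subM Sig T T with hA
  have hAPD : A.PosDef := subM_posDef hSig T
  have hdet : IsUnit A.det := isUnit_iff_ne_zero.mpr hAPD.det_pos.ne'
  set w := extendT T (A⁻¹ *ᵥ restrv v T) with hwdef
  have hw0 : ∀ j, j ∉ T → w j = 0 := fun j hj => by
    simp [hwdef, extendT, dif_neg hj]
  have hwT : ∀ i (hi : i ∈ T), w i = (A⁻¹ *ᵥ restrv v T) ⟨i, hi⟩ := fun i hi => by
    simp [hwdef, extendT, dif_pos hi]
  have hSw : ∀ i, i ∈ T → (Sig *ᵥ w) i = v i := by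
    intro i hi
    rw [hwdef, mulVec_extendT Sig T _ i hi, ← hA, Matrix.mulVec_mulVec,
      Matrix.mul_nonsing_inv A hdet, Matrix.one_mulVec]
    rfl
  have hth0 : ∀ j, j ∉ T → th0 j = 0 := by
    intro j hj
    by_contra h
    exact hj (hST (by simp [suppv, h]))
  have hv0 : ∀ i, i ∈ T → v i ≠ 0 := by
    intro i hi
    have : i ∈ suppv v := hsuppv ▸ hi
    simpa [suppv] using this
  have hv0' : ∀ j, j ∉ T → v j = 0 := by
    intro j hj
    by_contra h
    exact hj (hsuppv ▸ (by simp [suppv, h] : j ∈ suppv v))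
  have dirA : sgnv thinf = v →
      (∀ i ∈ T, thinf i = th0 i - xi * w i) ∧ (∀ j, j ∉ T → thinf j = 0) := by
    intro hsgn
    have hz : ∀ j, j ∉ T → thinf j = 0 := by
      intro j hj
      have h1 : Real.sign (thinf j) = 0 := by
        have := congrFun hsgn j
        rw [show sgnv thinf j = Real.sign (thinf j) from rfl] at this
        rw [this]
        exact hv0' j hj
      exact Real.sign_eq_zero_iff.mp h1
    have hne : ∀ i ∈ T, thinf i ≠ 0 := by
      intro i hi h0
      apply hv0 i hi
      have := congrFun hsgn i
      rw [show sgnv thinf i = Real.sign (thinf i) from rfl, h0, Real.sign_zero] at this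
      exact this.symm
    have hsupp : thinf - th0 = extendT T (restrv (thinf - th0) T) := by
      funext j
      by_cases hj : j ∈ T
      · simp [extendT, dif_pos hj, restrv]
      · simp [extendT, dif_neg hj, hz j hj, hth0 j hj]
    have hAu : A *ᵥ restrv (thinf - th0) T = (-xi) • restrv v T := by
      funext i
      have h1 : (Sig *ᵥ (thinf - th0)) i.val + xi * Real.sign (thinf i.val) = 0 :=
        (kkt_nec hSig hxi hmin i.val).1 (hne i.val i.2)
      have hsg : Real.sign (thinf i.val) = v i.val := congrFun hsgn i.val
      have h2 : (Sig *ᵥ (thinf - th0)) i.val = (A *ᵥ restrv (thinf - th0) T) i := by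
        conv_lhs => rw [hsupp]
        rw [mulVec_extendT Sig T _ i.val i.2, ← hA]
      rw [hsg] at h1
      rw [← h2]
      simp only [Pi.smul_apply, smul_eq_mul]
      show (Sig *ᵥ (thinf - th0)) i.val = -xi * v i.val
      linarith
    have hu : restrv (thinf - th0) T = (-xi) • (A⁻¹ *ᵥ restrv v T) := by
      have h3 : A⁻¹ *ᵥ (A *ᵥ restrv (thinf - th0) T) = restrv (thinf - th0) T := by
        rw [Matrix.mulVec_mulVec, Matrix.nonsing_inv_mul A hdet, Matrix.one_mulVec]
      rw [← h3, hAu, Matrix.mulVec_smul]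
    constructor
    · intro i hi
      have h4 := congrFun hu ⟨i, hi⟩
      simp only [Pi.smul_apply, smul_eq_mul, restrv, Pi.sub_apply] at h4
      rw [hwT i hi]
      linarith
    · exact hz
  constructor
  · constructor
    · intro hsgn
      obtain ⟨hT, hTc⟩ := dirA hsgn
      have hdiff : thinf - th0 = (-xi) • w := by
        funext k
        by_cases hk : k ∈ T
        · have := hT k hk
          simp only [Pi.sub_apply, Pi.smul_apply, smul_eq_mul, this]
          ring
        · simp [hTc k hk, hth0 k hk, hw0 k hk]
      constructor
      · intro j hj
        have hkb := (kkt_nec hSig hxi hmin j).2 (hTc j hj)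
        rw [hdiff, Matrix.mulVec_smul] at hkb
        simp only [Pi.smul_apply, smul_eq_mul, abs_mul, abs_neg, abs_of_pos hxi] at hkb
        nlinarith [abs_nonneg ((Sig *ᵥ w) j)]
      · intro i hi
        have := congrFun hsgn i
        rw [show sgnv thinf i = Real.sign (thinf i) from rfl] at this
        rw [← this, hT i hi]
    · rintro ⟨hP1, hP2⟩
      set ts : Fin p → ℝ := fun k => th0 k - xi * w k with hts
      set z : Fin p → ℝ := fun j => if j ∈ T then v j else (Sig *ᵥ w) j with hzdef
      have hz1 : ∀ i, |z i| ≤ 1 := by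
        intro i
        by_cases hi : i ∈ T
        · rw [hzdef]
          simp only [if_pos hi]
          rcases hv i with h | h | h <;> simp [h]
        · rw [hzdef]
          simp only [if_neg hi]
          exact hP1 i hi
      have hz2 : ∀ i, ts i ≠ 0 → z i = Real.sign (ts i) := by
        intro i hne
        by_cases hi : i ∈ T
        · rw [hzdef]; simp only [if_pos hi]
          exact hP2 i hi
        · exfalso
          apply hne
          rw [hts]
          simp [hth0 i hi, hw0 i hi]
      have heq : ∀ i, (Sig *ᵥ (ts - th0)) i + xi * z i = 0 := by
        intro i
        have hdiff : ts - th0 = (-xi) • w := by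
          funext k
          simp only [hts, Pi.sub_apply, Pi.smul_apply, smul_eq_mul]
          ring
        rw [hdiff, Matrix.mulVec_smul]
        by_cases hi : i ∈ T
        · rw [hzdef]
          simp only [if_pos hi, Pi.smul_apply, smul_eq_mul, hSw i hi]
          ring
        · rw [hzdef]
          simp only [if_neg hi, Pi.smul_apply, smul_eq_mul]
          ring
      have hmin' := kkt_suf hSig hxi hz1 hz2 heq
      have heqt : thinf = ts := min_uniq hSig hxi hmin hmin'
      funext i
      rw [heqt]
      by_cases hi : i ∈ T
      · show Real.sign (ts i) = v i
        rw [hts]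
        exact (hP2 i hi).symm
      · show Real.sign (ts i) = v i
        rw [hts]
        simp only [hth0 i hi, hw0 i hi]
        rw [show (0:ℝ) - xi * 0 = 0 by ring, Real.sign_zero]
        exact (hv0' i hi).symm
  · exact dirA
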